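/- For every real order ν ≥ 0 and every real x > 0, writing a = #{t ∈ (0,x) : J_ν(t) = 0} and b = #{t ∈ (0,x) : J_{ν+1}(t) = 0} (both sets being finite), one has b ≤ a ≤ b + 1; that is, a − b ∈ {0, 1}. -/

import Mathlib

open Real

/-- Bessel function of the first kind of real order `ν`, defined by its series. -/
noncomputable def besselJ (ν : ℝ) (x : ℝ) : ℝ :=
  ∑' s : ℕ, ((-1 : ℝ) ^ s) * (x / 2) ^ (ν + 2 * (s : ℝ)) /
    ((s.factorial : ℝ) * Real.Gamma (ν + (s : ℝ) + 1))


noncomputable def besselg (c : ℝ) (u : ℝ) : ℝ :=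
  ∑' s : ℕ, ((-1 : ℝ) ^ s) * u ^ s / ((s.factorial : ℝ) * Real.Gamma (c + (s : ℝ) + 1))

lemma gammaB_pos {c : ℝ} (hc : 0 ≤ c) (s : ℕ) : 0 < Real.Gamma (c + s + 1) :=
  Real.Gamma_pos_of_pos (by positivity)

lemma gamma_fact_le {c : ℝ} (hc : 0 ≤ c) (s : ℕ) :
    (s.factorial : ℝ) * Real.Gamma (c + 1) ≤ Real.Gamma (c + s + 1) := by
  induction s with
  | zero => simp
  | succ n ih =>
    have h1 : Real.Gamma (c + (n+1 : ℕ) + 1) = (c + n + 1) * Real.Gamma (c + n + 1) := by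
      rw [show c + ((n:ℕ)+1 : ℕ) + 1 = (c + (n:ℕ) + 1) + 1 by push_cast; ring,
        Real.Gamma_add_one (by positivity)]
    rw [h1]
    have h2 : ((n+1 : ℕ).factorial : ℝ) = (n+1) * n.factorial := by
      push_cast [Nat.factorial_succ]; ring
    rw [h2]
    calc (n+1 : ℝ) * n.factorial * Real.Gamma (c+1) = (n+1) * ((n.factorial : ℝ) * Real.Gamma (c+1)) := by ring
    _ ≤ (n+1) * Real.Gamma (c + n + 1) := by
        apply mul_le_mul_of_nonneg_left ih (by positivity)
    _ ≤ (c + n + 1) * Real.Gamma (c + n + 1) := by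
        apply mul_le_mul_of_nonneg_right (by linarith) (gammaB_pos hc n).le

lemma gamma_pow_le {a : ℝ} (ha : 0 < a) (s : ℕ) :
    a ^ s * Real.Gamma a ≤ Real.Gamma (a + s) := by
  induction s with
  | zero => simp
  | succ n ih =>
    have h1 : Real.Gamma (a + (n+1 : ℕ)) = (a + n) * Real.Gamma (a + n) := by
      rw [show a + ((n:ℕ)+1 : ℕ) = (a + (n:ℕ)) + 1 by push_cast; ring,
        Real.Gamma_add_one (by positivity)]
    rw [h1, pow_succ]
    calc a ^ n * a * Real.Gamma a = a * (a ^ n * Real.Gamma a) := by ring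
    _ ≤ a * Real.Gamma (a + n) := by apply mul_le_mul_of_nonneg_left ih ha.le
    _ ≤ (a + n) * Real.Gamma (a + n) := by
        apply mul_le_mul_of_nonneg_right (by linarith) (Real.Gamma_pos_of_pos (by positivity)).le

lemma bessel_term_bound {c : ℝ} (hc : 0 ≤ c) (s : ℕ) (u : ℝ) :
    |((-1 : ℝ) ^ s) * u ^ s / ((s.factorial : ℝ) * Real.Gamma (c + s + 1))|
      ≤ (1 / Real.Gamma (c+1)) * (|u| ^ s / s.factorial) := by
  have h2 := gammaB_pos hc s
  have hg : 0 < Real.Gamma (c+1) := Real.Gamma_pos_of_pos (by positivity)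
  have hf : (0:ℝ) < s.factorial := by positivity
  have key : Real.Gamma (c+1) ≤ Real.Gamma (c+s+1) := by
    have h1 := gamma_fact_le hc s
    have h3 : (1:ℝ) ≤ s.factorial := by exact_mod_cast s.factorial_pos
    nlinarith
  rw [abs_div, abs_mul, abs_pow, abs_pow, abs_neg, abs_one, one_pow, one_mul,
    abs_mul, Nat.abs_cast, abs_of_pos h2]
  have hr : 1/Real.Gamma (c+1) * (|u|^s/(s.factorial:ℝ)) = |u|^s / ((s.factorial:ℝ) * Real.Gamma (c+1)) := by
    rw [div_mul_div_comm, one_mul, mul_comm]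
  rw [hr]
  gcongr

lemma summable_besselg {c : ℝ} (hc : 0 ≤ c) (u : ℝ) :
    Summable (fun s : ℕ => ((-1 : ℝ) ^ s) * u ^ s / ((s.factorial : ℝ) * Real.Gamma (c + s + 1))) := by
  apply Summable.of_abs
  apply Summable.of_nonneg_of_le (fun s => abs_nonneg _) (fun s => bessel_term_bound hc s u)
  exact (Real.summable_pow_div_factorial |u|).mul_left _


lemma besselJ_eq {ν x : ℝ} (hx : 0 < x) :
    besselJ ν x = (x/2) ^ ν * besselg ν ((x/2)^2) := by
  unfold besselJ besselg
  rw [← tsum_mul_left]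
  apply tsum_congr
  intro s
  have hx2 : (0:ℝ) < x/2 := by linarith
  have h1 : (x/2) ^ (ν + 2*(s:ℝ)) = (x/2)^ν * ((x/2)^2)^s := by
    rw [Real.rpow_add hx2, show (2*(s:ℝ)) = ((2*s : ℕ):ℝ) by push_cast; ring,
      Real.rpow_natCast, pow_mul]
  rw [h1]; ring

lemma besselg_zero (c : ℝ) : besselg c 0 = 1 / Real.Gamma (c+1) := by
  unfold besselg
  rw [tsum_eq_single 0]
  · norm_num
  · intro s hs
    simp [zero_pow hs]

lemma dterm_bound {c : ℝ} (hc : 0 ≤ c) (s : ℕ) {u R : ℝ} (hR : 1 ≤ R) (hu : |u| ≤ R) :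
    |((-1 : ℝ) ^ s) * ((s:ℝ) * u ^ (s-1)) / ((s.factorial : ℝ) * Real.Gamma (c + (s:ℝ) + 1))|
      ≤ (1 / Real.Gamma (c+1)) * (R ^ s / s.factorial) := by
  have h2 := gammaB_pos hc s
  have hg : 0 < Real.Gamma (c+1) := Real.Gamma_pos_of_pos (by positivity)
  have hf : (0:ℝ) < s.factorial := by positivity
  have hR0 : 0 ≤ R := by linarith
  have hnum : |((-1 : ℝ) ^ s) * ((s:ℝ) * u ^ (s-1))| ≤ (s:ℝ) * R ^ s := by
    rw [abs_mul, abs_pow, abs_neg, abs_one, one_pow, one_mul, abs_mul, Nat.abs_cast, abs_pow]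
    apply mul_le_mul_of_nonneg_left _ (Nat.cast_nonneg s)
    calc |u| ^ (s-1) ≤ R ^ (s-1) := pow_le_pow_left₀ (abs_nonneg u) hu _
    _ ≤ R ^ s := pow_le_pow_right₀ hR (Nat.sub_le s 1)
  have hden : (s:ℝ) * Real.Gamma (c+1) ≤ Real.Gamma (c + s + 1) := by
    have h1 := gamma_fact_le hc s
    have h3 : (s:ℝ) ≤ s.factorial := by exact_mod_cast Nat.self_le_factorial s
    nlinarith
  rw [abs_div, abs_of_pos (mul_pos hf h2), div_le_iff₀ (by positivity)]
  calc |((-1 : ℝ) ^ s) * ((s:ℝ) * u ^ (s-1))| ≤ (s:ℝ) * R ^ s := hnum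
  _ ≤ 1 / Real.Gamma (c + 1) * (R ^ s / ↑s.factorial) * (↑s.factorial * Real.Gamma (c + ↑s + 1)) := by
      rw [div_mul_div_comm, one_mul, div_mul_eq_mul_div, le_div_iff₀ (by positivity)]
      have h4 : (R^s * (s.factorial:ℝ)) * ((s:ℝ) * Real.Gamma (c+1)) ≤ (R^s * (s.factorial:ℝ)) * Real.Gamma (c + s + 1) :=
        mul_le_mul_of_nonneg_left hden (by positivity)
      nlinarith [h4]

lemma summable_dterm {c : ℝ} (hc : 0 ≤ c) (u : ℝ) :
    Summable (fun s : ℕ => ((-1 : ℝ) ^ s) * ((s:ℝ) * u ^ (s-1)) / ((s.factorial : ℝ) * Real.Gamma (c + (s:ℝ) + 1))) := by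
  apply Summable.of_abs
  apply Summable.of_nonneg_of_le (fun s => abs_nonneg _)
    (fun s => dterm_bound hc s (R := |u| + 1) (by linarith [abs_nonneg u]) (by linarith))
  exact (Real.summable_pow_div_factorial _).mul_left _

lemma tsum_dterm_eq {c : ℝ} (hc : 0 ≤ c) (u0 : ℝ) :
    (∑' s : ℕ, ((-1 : ℝ) ^ s) * ((s:ℝ) * u0 ^ (s-1)) / ((s.factorial : ℝ) * Real.Gamma (c + (s:ℝ) + 1)))
      = -besselg (c+1) u0 := by
  rw [Summable.tsum_eq_zero_add (summable_dterm hc u0)]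
  have h1 : ∀ s : ℕ, ((-1 : ℝ) ^ (s+1)) * (((s+1:ℕ):ℝ) * u0 ^ (s+1-1)) / (((s+1:ℕ).factorial : ℝ) * Real.Gamma (c + ((s+1:ℕ):ℝ) + 1))
      = -(((-1 : ℝ) ^ s) * u0 ^ s / ((s.factorial : ℝ) * Real.Gamma ((c+1) + (s:ℝ) + 1))) := by
    intro s
    have harg : c + ((s+1 : ℕ):ℝ) + 1 = (c+1) + (s:ℝ) + 1 := by push_cast; ring
    have hfac : (((s+1 : ℕ)).factorial : ℝ) = ((s:ℝ)+1) * s.factorial := by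
      push_cast [Nat.factorial_succ]; ring
    have hgp : 0 < Real.Gamma ((c+1) + s + 1) := gammaB_pos (by linarith) s
    have hf : (0:ℝ) < s.factorial := by positivity
    have hs1 : ((s:ℝ)+1) ≠ 0 := by positivity
    rw [harg, hfac, pow_succ, Nat.add_sub_cancel]
    push_cast
    field_simp
  rw [tsum_congr h1, tsum_neg]
  norm_num
  rfl

theorem hasDerivAt_besselg {c : ℝ} (hc : 0 ≤ c) (u0 : ℝ) :
    HasDerivAt (besselg c) (-besselg (c+1) u0) u0 := by
  rw [← tsum_dterm_eq hc u0]
  set R : ℝ := |u0| + 1 with hRdef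
  have hR1 : (1:ℝ) ≤ R := by simp only [hRdef]; linarith [abs_nonneg u0]
  have hu0R : |u0| < R := by simp [hRdef]
  refine hasDerivAt_of_tendstoUniformlyOn (l := Filter.atTop)
    (f := fun n u => ∑ s ∈ Finset.range n,
        ((-1 : ℝ) ^ s) * u ^ s / ((s.factorial : ℝ) * Real.Gamma (c + (s:ℝ) + 1)))
    (f' := fun n u => ∑ s ∈ Finset.range n,
        ((-1 : ℝ) ^ s) * ((s:ℝ) * u ^ (s-1)) / ((s.factorial : ℝ) * Real.Gamma (c + (s:ℝ) + 1)))
    (g := besselg c)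
    (g' := fun u => ∑' s : ℕ, ((-1 : ℝ) ^ s) * ((s:ℝ) * u ^ (s-1)) / ((s.factorial : ℝ) * Real.Gamma (c + (s:ℝ) + 1)))
    (isOpen_Ioo (a := -R) (b := R)) ?_ ?_ ?_ ?_
  · exact tendstoUniformlyOn_tsum_nat ((Real.summable_pow_div_factorial R).mul_left (1 / Real.Gamma (c+1)))
      (fun s u hu => by
        rw [Real.norm_eq_abs]
        exact dterm_bound hc s hR1 (abs_le.mpr ⟨(hu.1).le, (hu.2).le⟩))
  · filter_upwards with n u _
    apply HasDerivAt.fun_sum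
    intro s _
    have h := ((hasDerivAt_pow s u).const_mul ((-1:ℝ)^s)).div_const
      ((s.factorial : ℝ) * Real.Gamma (c + (s:ℝ) + 1))
    convert h using 1
  · intro u _
    exact (summable_besselg hc u).hasSum.tendsto_sum_nat
  · exact ⟨neg_lt_of_abs_lt hu0R, lt_of_abs_lt hu0R⟩

lemma continuous_besselg {c : ℝ} (hc : 0 ≤ c) : Continuous (besselg c) :=
  continuous_iff_continuousAt.mpr fun u => (hasDerivAt_besselg hc u).continuousAt

lemma tsum_small_le : (∑' s : ℕ, ((1/2:ℝ) ^ (s+1) / ((s+1).factorial : ℝ))) ≤ 3/4 := by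
  have hm : Summable (fun s : ℕ => (1/2:ℝ) ^ (s+1) / ((s+1).factorial : ℝ)) :=
    (summable_nat_add_iff (f := fun s : ℕ => (1/2:ℝ) ^ s / (s.factorial : ℝ)) 1).mpr
      (Real.summable_pow_div_factorial (1/2))
  rw [Summable.tsum_eq_zero_add hm]
  have h0 : ((1/2:ℝ) ^ (0+1) / ((0+1).factorial : ℝ)) = 1/2 := by norm_num
  have hgeo : Summable (fun s : ℕ => (1/8:ℝ) * (1/2)^s) :=
    (summable_geometric_of_lt_one (by norm_num) (by norm_num)).mul_left _
  have hle : (∑' s : ℕ, ((1/2:ℝ) ^ (s+1+1) / ((s+1+1).factorial : ℝ))) ≤ ∑' s : ℕ, (1/8:ℝ) * (1/2)^s := by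
    apply Summable.tsum_le_tsum _ ((summable_nat_add_iff (f := fun s : ℕ => (1/2:ℝ) ^ (s+1) / ((s+1).factorial : ℝ)) 1).mpr hm) hgeo
    intro s
    have hf2 : (2:ℝ) ≤ ((s+1+1).factorial : ℝ) := by
      have h5 : (2:ℕ) ≤ (s+1+1).factorial := Nat.le_trans (by norm_num) (Nat.factorial_le (by omega : 2 ≤ s+1+1))
      exact_mod_cast h5
    calc (1/2:ℝ) ^ (s+1+1) / ((s+1+1).factorial : ℝ) ≤ (1/2:ℝ)^(s+1+1) / 2 := by
          apply div_le_div_of_nonneg_left (by positivity) (by norm_num) hf2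
    _ = (1/8:ℝ) * (1/2)^s := by ring
  have hgeosum : (∑' s : ℕ, (1/8:ℝ) * (1/2)^s) = 1/4 := by
    rw [tsum_mul_left, tsum_geometric_of_lt_one (by norm_num) (by norm_num)]
    norm_num
  rw [h0]
  rw [hgeosum] at hle
  linarith

lemma besselg_pos {c u : ℝ} (hc : 0 ≤ c) (hu : 0 ≤ u) (h : 2*u ≤ c+1) : 0 < besselg c u := by
  have hc1 : (0:ℝ) < c + 1 := by linarith
  have hg : 0 < Real.Gamma (c+1) := Real.Gamma_pos_of_pos hc1
  have hterm : ∀ s : ℕ,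
      |((-1 : ℝ) ^ (s+1)) * u ^ (s+1) / (((s+1).factorial : ℝ) * Real.Gamma (c + ((s+1:ℕ):ℝ) + 1))|
        ≤ (1/Real.Gamma (c+1)) * ((1/2:ℝ) ^ (s+1) / ((s+1).factorial : ℝ)) := by
    intro s
    have hgp : 0 < Real.Gamma (c + ((s+1:ℕ):ℝ) + 1) := gammaB_pos hc (s+1)
    have hfp : (0:ℝ) < ((s+1).factorial : ℝ) := by positivity
    have hpow : (c+1) ^ (s+1) * Real.Gamma (c+1) ≤ Real.Gamma (c + ((s+1:ℕ):ℝ) + 1) := by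
      have h2 := gamma_pow_le hc1 (s+1)
      have harg : (c+1) + ((s+1:ℕ):ℝ) = c + ((s+1:ℕ):ℝ) + 1 := by push_cast; ring
      rwa [harg] at h2
    rw [abs_div, abs_mul, abs_pow, abs_pow, abs_neg, abs_one, one_pow, one_mul,
      abs_mul, Nat.abs_cast, abs_of_pos hgp, abs_of_nonneg hu]
    rw [div_le_iff₀ (by positivity)]
    have hup : u ^ (s+1) * ((c+1)^(s+1))⁻¹ ≤ (1/2:ℝ)^(s+1) := by
      rw [← div_eq_mul_inv, ← div_pow]
      apply pow_le_pow_left₀ (by positivity) _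
      rw [div_le_iff₀ hc1]; linarith
    calc u ^ (s+1)
        = (u ^ (s+1) * ((c+1)^(s+1))⁻¹) * (c+1)^(s+1) := by field_simp
    _ ≤ (1/2:ℝ)^(s+1) * (c+1)^(s+1) := mul_le_mul_of_nonneg_right hup (by positivity)
    _ = (1/Real.Gamma (c+1)) * ((1/2:ℝ)^(s+1) / ((s+1).factorial : ℝ))
          * (((s+1).factorial : ℝ) * ((c+1)^(s+1) * Real.Gamma (c+1))) := by
          field_simp
    _ ≤ (1/Real.Gamma (c+1)) * ((1/2:ℝ)^(s+1) / ((s+1).factorial : ℝ))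
          * (((s+1).factorial : ℝ) * Real.Gamma (c + ((s+1:ℕ):ℝ) + 1)) := by
          apply mul_le_mul_of_nonneg_left _ (by positivity)
          exact mul_le_mul_of_nonneg_left hpow hfp.le
  have hsum0 := summable_besselg hc u
  have hshift : Summable (fun s : ℕ =>
      ((-1 : ℝ) ^ (s+1)) * u ^ (s+1) / (((s+1).factorial : ℝ) * Real.Gamma (c + ((s+1:ℕ):ℝ) + 1))) :=
    (summable_nat_add_iff (f := fun s : ℕ => ((-1 : ℝ) ^ s) * u ^ s / ((s.factorial : ℝ) * Real.Gamma (c + (s:ℝ) + 1))) 1).mpr hsum0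
  have hm : Summable (fun s : ℕ => (1/2:ℝ) ^ (s+1) / ((s+1).factorial : ℝ)) :=
    (summable_nat_add_iff (f := fun s : ℕ => (1/2:ℝ) ^ s / (s.factorial : ℝ)) 1).mpr
      (Real.summable_pow_div_factorial (1/2))
  have hmaj : Summable (fun s : ℕ => (1/Real.Gamma (c+1)) * ((1/2:ℝ) ^ (s+1) / ((s+1).factorial : ℝ))) :=
    hm.mul_left _
  have htail : |∑' s : ℕ, ((-1 : ℝ) ^ (s+1)) * u ^ (s+1) / (((s+1).factorial : ℝ) * Real.Gamma (c + ((s+1:ℕ):ℝ) + 1))|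
      ≤ (1/Real.Gamma (c+1)) * (3/4) := by
    calc |∑' s : ℕ, ((-1 : ℝ) ^ (s+1)) * u ^ (s+1) / (((s+1).factorial : ℝ) * Real.Gamma (c + ((s+1:ℕ):ℝ) + 1))|
        ≤ ∑' s : ℕ, |((-1 : ℝ) ^ (s+1)) * u ^ (s+1) / (((s+1).factorial : ℝ) * Real.Gamma (c + ((s+1:ℕ):ℝ) + 1))| := by
          have h6 := norm_tsum_le_tsum_norm (f := fun s : ℕ =>
            ((-1 : ℝ) ^ (s+1)) * u ^ (s+1) / (((s+1).factorial : ℝ) * Real.Gamma (c + ((s+1:ℕ):ℝ) + 1)))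
            (by simpa only [Real.norm_eq_abs] using hshift.abs)
          simpa only [Real.norm_eq_abs] using h6
    _ ≤ ∑' s : ℕ, (1/Real.Gamma (c+1)) * ((1/2:ℝ) ^ (s+1) / ((s+1).factorial : ℝ)) :=
          Summable.tsum_le_tsum hterm hshift.abs hmaj
    _ = (1/Real.Gamma (c+1)) * ∑' s : ℕ, ((1/2:ℝ) ^ (s+1) / ((s+1).factorial : ℝ)) := tsum_mul_left
    _ ≤ (1/Real.Gamma (c+1)) * (3/4) :=
          mul_le_mul_of_nonneg_left tsum_small_le (by positivity)
  have hsplit : besselg c u = 1/Real.Gamma (c+1)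
      + ∑' s : ℕ, ((-1 : ℝ) ^ (s+1)) * u ^ (s+1) / (((s+1).factorial : ℝ) * Real.Gamma (c + ((s+1:ℕ):ℝ) + 1)) := by
    unfold besselg
    rw [Summable.tsum_eq_zero_add hsum0]
    norm_num
  rw [hsplit]
  have := abs_le.mp htail
  have h34 : (1/Real.Gamma (c+1)) * (3/4) < 1/Real.Gamma (c+1) := by
    rw [one_div]
    nlinarith [inv_pos.mpr hg]
  linarith [this.1]

lemma besselg_rec {c : ℝ} (hc : 0 ≤ c) (u : ℝ) :
    besselg c u = (c+1) * besselg (c+1) u - u * besselg (c+2) u := by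
  have hc1 : (0:ℝ) < c + 1 := by linarith
  have hΓc1 : Real.Gamma (c+1+1) = (c+1) * Real.Gamma (c+1) := Real.Gamma_add_one hc1.ne'
  have hsum0 := summable_besselg hc u
  have hsum1 := (summable_besselg (by linarith : (0:ℝ) ≤ c+1) u).mul_left (c+1)
  have hsum2 := (summable_besselg (by linarith : (0:ℝ) ≤ c+2) u).mul_left u
  unfold besselg
  rw [← tsum_mul_left, ← tsum_mul_left]
  rw [Summable.tsum_eq_zero_add hsum0, Summable.tsum_eq_zero_add hsum1, add_sub_assoc, ← Summable.tsum_sub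
    ((summable_nat_add_iff (f := fun s : ℕ => (c+1) * (((-1 : ℝ) ^ s) * u ^ s / ((s.factorial : ℝ) * Real.Gamma (c+1 + (s:ℝ) + 1)))) 1).mpr hsum1)
    hsum2]
  have h0 : ((-1 : ℝ) ^ (0:ℕ)) * u ^ (0:ℕ) / (((0:ℕ).factorial : ℝ) * Real.Gamma (c + ((0:ℕ):ℝ) + 1))
      = (c+1) * (((-1 : ℝ) ^ (0:ℕ)) * u ^ (0:ℕ) / (((0:ℕ).factorial : ℝ) * Real.Gamma (c+1 + ((0:ℕ):ℝ) + 1))) := by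
    have hg1 : 0 < Real.Gamma (c+1) := Real.Gamma_pos_of_pos hc1
    norm_num
    rw [hΓc1]
    field_simp
  have hterm : ∀ s : ℕ,
      ((-1 : ℝ) ^ (s+1)) * u ^ (s+1) / (((s+1).factorial : ℝ) * Real.Gamma (c + ((s+1:ℕ):ℝ) + 1))
      = (c+1) * (((-1 : ℝ) ^ (s+1)) * u ^ (s+1) / (((s+1).factorial : ℝ) * Real.Gamma (c+1 + ((s+1:ℕ):ℝ) + 1)))
        - u * (((-1 : ℝ) ^ s) * u ^ s / ((s.factorial : ℝ) * Real.Gamma (c+2 + (s:ℝ) + 1))) := by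
    intro s
    have hB : (0:ℝ) < c + (s:ℝ) + 2 := by positivity
    have hΓa : Real.Gamma (c+1 + ((s+1:ℕ):ℝ) + 1) = (c+(s:ℝ)+2) * Real.Gamma (c+(s:ℝ)+2) := by
      rw [show c+1+((s+1:ℕ):ℝ)+1 = (c+(s:ℝ)+2)+1 from by push_cast; ring, Real.Gamma_add_one hB.ne']
    have hΓb : Real.Gamma (c+2 + (s:ℝ) + 1) = (c+(s:ℝ)+2) * Real.Gamma (c+(s:ℝ)+2) := by
      rw [show c+2+(s:ℝ)+1 = (c+(s:ℝ)+2)+1 from by ring, Real.Gamma_add_one hB.ne']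
    have hΓc : Real.Gamma (c + ((s+1:ℕ):ℝ) + 1) = Real.Gamma (c+(s:ℝ)+2) := by
      rw [show c+((s+1:ℕ):ℝ)+1 = c+(s:ℝ)+2 from by push_cast; ring]
    have hfac : (((s+1).factorial : ℝ)) = ((s:ℝ)+1) * s.factorial := by
      push_cast [Nat.factorial_succ]; ring
    have hgp : 0 < Real.Gamma (c+(s:ℝ)+2) := Real.Gamma_pos_of_pos hB
    have hfp : (0:ℝ) < s.factorial := by positivity
    have hs1 : (0:ℝ) < (s:ℝ)+1 := by positivity
    rw [hΓa, hΓb, hΓc, hfac, pow_succ, pow_succ]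
    field_simp
    ring
  rw [h0, tsum_congr hterm]

lemma besselg_succ_ne_zero {c u : ℝ} (hc : 0 ≤ c) (hu : 0 < u) (h0 : besselg c u = 0) :
    besselg (c+1) u ≠ 0 := by
  intro h1
  have key : ∀ k : ℕ, besselg (c + k) u = 0 ∧ besselg (c + k + 1) u = 0 := by
    intro k
    induction k with
    | zero =>
      norm_num
      exact ⟨h0, h1⟩
    | succ n ih =>
      have hcn : (0:ℝ) ≤ c + n := by positivity
      have hrec := besselg_rec hcn u
      rw [ih.1, ih.2] at hrec
      have h2 : besselg (c + (n:ℝ) + 2) u = 0 := by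
        have h3 : u * besselg (c + (n:ℝ) + 2) u = 0 := by linarith
        exact (mul_eq_zero.mp h3).resolve_left hu.ne'
      have hcast : (((n+1:ℕ)):ℝ) = (n:ℝ)+1 := by push_cast; ring
      rw [hcast]
      constructor
      · convert ih.2 using 2
        ring
      · convert h2 using 2
        ring
  set k := ⌈2*u⌉₊ with hk
  have hle : 2*u ≤ (c + (k:ℝ)) + 1 := by
    have := Nat.le_ceil (2*u)
    simp only [← hk] at this
    linarith
  have hpos := besselg_pos (c := c + (k:ℝ)) (by positivity) hu.le hle
  exact hpos.ne' (key k).1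

lemma hasDerivAt_besselF {c : ℝ} (hc : 0 ≤ c) (t : ℝ) :
    HasDerivAt (fun t => besselg c ((t/2)^2)) (-(t/2) * besselg (c+1) ((t/2)^2)) t := by
  have hinner : HasDerivAt (fun t : ℝ => (t/2)^2) (t/2) t := by
    have h := ((hasDerivAt_id t).div_const 2).pow 2
    refine h.congr_deriv ?_
    norm_num
    ring
  have h := (hasDerivAt_besselg hc ((t/2)^2)).comp t hinner
  refine h.congr_deriv ?_
  ring

lemma continuous_besselF {c : ℝ} (hc : 0 ≤ c) : Continuous (fun t => besselg c ((t/2)^2)) :=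
  (continuous_besselg hc).comp (by continuity)

/-- Rolle step: between two zeros of `J_ν` there is a zero of `J_{ν+1}`. -/
lemma zero_between_lower {ν : ℝ} (hν : 0 ≤ ν) {t1 t2 : ℝ} (h01 : 0 < t1) (h12 : t1 < t2)
    (hz1 : besselg ν ((t1/2)^2) = 0) (hz2 : besselg ν ((t2/2)^2) = 0) :
    ∃ ξ ∈ Set.Ioo t1 t2, besselg (ν+1) ((ξ/2)^2) = 0 := by
  obtain ⟨ξ, hmem, hval⟩ := exists_hasDerivAt_eq_zero
    (f := fun t => besselg ν ((t/2)^2)) (f' := fun t => -(t/2) * besselg (ν+1) ((t/2)^2))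
    h12 (continuous_besselF hν).continuousOn (hz1.trans hz2.symm)
    (fun t _ => hasDerivAt_besselF hν t)
  refine ⟨ξ, hmem, ?_⟩
  have hξ : 0 < ξ := h01.trans hmem.1
  have := mul_eq_zero.mp hval
  rcases this with h | h
  · exfalso; have : ξ/2 > 0 := by linarith
    simp at h; linarith
  · exact h

/-- Rolle step with weight: between two zeros of `J_{ν+1}` (or `0` and a zero)
there is a zero of `J_ν`. -/
lemma zero_between_upper {ν : ℝ} (hν : 0 ≤ ν) {t1 t2 : ℝ} (h01 : 0 ≤ t1) (h12 : t1 < t2)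
    (hz1 : t1 = 0 ∨ besselg (ν+1) ((t1/2)^2) = 0) (hz2 : besselg (ν+1) ((t2/2)^2) = 0) :
    ∃ ξ ∈ Set.Ioo t1 t2, besselg ν ((ξ/2)^2) = 0 := by
  set p : ℝ := 2*ν + 2 with hp
  have hp1 : 1 ≤ p := by simp only [hp]; linarith
  have hppos : 0 < p := by linarith
  set K : ℝ → ℝ := fun t => t ^ p * besselg (ν+1) ((t/2)^2) with hK
  have hKcont : Continuous K := by
    apply Continuous.mul _ (continuous_besselF (by linarith))
    exact continuous_iff_continuousAt.mpr fun t =>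
      Real.continuousAt_rpow_const t p (Or.inr hppos.le)
  have hK1 : K t1 = 0 := by
    rcases hz1 with h | h
    · simp only [hK, h, Real.zero_rpow hppos.ne', zero_mul]
    · simp only [hK, h, mul_zero]
  have hK2 : K t2 = 0 := by simp only [hK, hz2, mul_zero]
  have hKderiv : ∀ t ∈ Set.Ioo t1 t2, HasDerivAt K
      (p * t ^ (p-1) * besselg (ν+1) ((t/2)^2) + t ^ p * (-(t/2) * besselg (ν+1+1) ((t/2)^2))) t := by
    intro t ht
    have h1 : HasDerivAt (fun t : ℝ => t ^ p) (p * t ^ (p-1)) t :=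
      Real.hasDerivAt_rpow_const (Or.inr hp1)
    exact h1.mul (hasDerivAt_besselF (c := ν+1) (by linarith) t)
  obtain ⟨ξ, hmem, hval⟩ := exists_hasDerivAt_eq_zero h12 hKcont.continuousOn
    (hK1.trans hK2.symm) hKderiv
  refine ⟨ξ, hmem, ?_⟩
  rw [show ν+1+1 = ν+2 from by ring] at hval
  have hξ : 0 < ξ := lt_of_le_of_lt h01 hmem.1
  -- rewrite ξ^p = ξ^(p-1) * ξ
  have hsplit : ξ ^ p = ξ ^ (p-1) * ξ := by
    calc ξ ^ p = ξ ^ (p - 1 + 1) := by congr 1; ring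
    _ = ξ ^ (p-1) * ξ ^ (1:ℝ) := Real.rpow_add hξ _ _
    _ = ξ ^ (p-1) * ξ := by rw [Real.rpow_one]
  have hpow_pos : 0 < ξ ^ (p-1) := Real.rpow_pos_of_pos hξ _
  have hrec := besselg_rec (by linarith : (0:ℝ) ≤ ν+1) ((ξ/2)^2)
  -- from hval : derivative equals zero
  rw [hsplit] at hval
  have hfac : ξ ^ (p-1) * (p * besselg (ν+1) ((ξ/2)^2)
      - ξ * (ξ/2) * besselg (ν+2) ((ξ/2)^2)) = 0 := by
    rw [← hval]; ring
  have hbr : p * besselg (ν+1) ((ξ/2)^2) - ξ * (ξ/2) * besselg (ν+2) ((ξ/2)^2) = 0 :=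
    (mul_eq_zero.mp hfac).resolve_left hpow_pos.ne'
  -- recurrence: besselg (ν+1) u = (ν+2) * besselg (ν+2) u - u * besselg (ν+3) u  -- (not this one)
  -- we use: besselg ν u = (ν+1) * besselg (ν+1) u - u * besselg (ν+2) u
  have hrec0 := besselg_rec hν ((ξ/2)^2)
  -- p = 2(ν+1), ξ*(ξ/2) = 2*(ξ/2)^2
  have : besselg ν ((ξ/2)^2) = 0 := by
    have he : ξ * (ξ/2) = 2 * ((ξ/2)^2) := by ring
    rw [he, hp] at hbr
    rw [hrec0]
    linarith
  exact this

lemma eventually_ne_of_hasDerivAt {f : ℝ → ℝ} {t0 d : ℝ} (hf : HasDerivAt f d t0)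
    (h0 : f t0 = 0) (hd : d ≠ 0) : ∀ᶠ t in nhdsWithin t0 {t0}ᶜ, f t ≠ 0 := by
  have hs := hasDerivAt_iff_tendsto_slope.mp hf
  have h2 : ∀ᶠ t in nhdsWithin t0 {t0}ᶜ, slope f t0 t ≠ 0 := hs.eventually_ne hd
  filter_upwards [h2, self_mem_nhdsWithin] with t hslope ht
  intro hft
  apply hslope
  rw [slope_def_field, hft, h0]
  simp

lemma finite_zeros {ν x : ℝ} (hν : 0 ≤ ν) (hx : 0 < x) :
    {t : ℝ | t ∈ Set.Ioo 0 x ∧ besselg ν ((t/2)^2) = 0}.Finite := by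
  set S := {t : ℝ | t ∈ Set.Ioo 0 x ∧ besselg ν ((t/2)^2) = 0} with hS
  by_contra hinf
  have hsub : S ⊆ Set.Icc 0 x := fun t ht => ⟨ht.1.1.le, ht.1.2.le⟩
  have hinf' : S.Infinite := hinf
  obtain ⟨t0, ht0K, hacc⟩ := hinf'.exists_accPt_of_subset_isCompact isCompact_Icc hsub
  -- every punctured neighborhood of t0 meets S
  haveI hNB : Filter.NeBot (nhdsWithin t0 {t0}ᶜ ⊓ Filter.principal S) := hacc
  have hmeets : ∀ U ∈ nhdsWithin t0 {t0}ᶜ, (U ∩ S).Nonempty := by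
    intro U hU
    have : U ∩ S ∈ nhdsWithin t0 {t0}ᶜ ⊓ Filter.principal S :=
      Filter.inter_mem_inf hU (Filter.mem_principal_self S)
    exact Filter.nonempty_of_mem this
  have ht0 : besselg ν ((t0/2)^2) = 0 := by
    -- t0 is in the closure of S
    have hclos : t0 ∈ closure S := by
      rw [mem_closure_iff_nhds]
      intro U hU
      obtain ⟨y, hyU, hyS⟩ := hmeets U (nhdsWithin_le_nhds hU)
      exact ⟨y, hyU, hyS⟩
    have hzero_closed : IsClosed {t : ℝ | besselg ν ((t/2)^2) = 0} :=
      isClosed_eq (continuous_besselF hν) continuous_const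
    have : closure S ⊆ {t : ℝ | besselg ν ((t/2)^2) = 0} :=
      closure_minimal (fun t ht => ht.2) hzero_closed
    exact this hclos
  have ht0pos : 0 < t0 := by
    rcases eq_or_lt_of_le ht0K.1 with h | h
    · exfalso
      rw [← h] at ht0
      norm_num at ht0
      rw [besselg_zero] at ht0
      have hg := Real.Gamma_pos_of_pos (show (0:ℝ) < ν+1 by linarith)
      exact (one_div_pos.mpr hg).ne' ht0
    · exact h
  -- t0 > 0 : simple zero gives isolation, contradiction
  have hne : besselg (ν+1) ((t0/2)^2) ≠ 0 :=
    besselg_succ_ne_zero hν (by positivity) ht0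
  have hd : -(t0/2) * besselg (ν+1) ((t0/2)^2) ≠ 0 := by
    apply mul_ne_zero _ hne
    intro h; apply ht0pos.ne'
    linarith [neg_eq_zero.mp h]
  have hev := eventually_ne_of_hasDerivAt (hasDerivAt_besselF hν t0) ht0 hd
  obtain ⟨U, hU, hUne⟩ := Filter.eventually_iff_exists_mem.mp hev
  obtain ⟨y, hyU, hyS⟩ := hmeets U hU
  exact hUne y hyU hyS.2

lemma finset_card_lemma (n : ℕ) : ∀ (S T : Finset ℝ), S.card = n →
    (∀ s1 ∈ S, ∀ s2 ∈ S, s1 < s2 → ∃ t ∈ T, s1 < t ∧ t < s2) → S.card ≤ T.card + 1 := by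
  induction n with
  | zero => intro S T h0 _; simp [h0]
  | succ n ih =>
    intro S T hcard h
    rcases Nat.eq_zero_or_pos n with hn | hn
    · omega
    have hSne : S.Nonempty := Finset.card_pos.mp (by omega)
    set m := S.max' hSne with hm
    set S' := S.erase m with hS'
    have hS'card : S'.card = n := by
      rw [hS', Finset.card_erase_of_mem (S.max'_mem hSne)]; omega
    have hS'ne : S'.Nonempty := Finset.card_pos.mp (by omega)
    set m' := S'.max' hS'ne with hm'
    have hm'S : m' ∈ S := Finset.mem_of_mem_erase (S'.max'_mem hS'ne)
    have hm'lt : m' < m := by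
      have h1 : m' ≤ m := S.le_max' m' hm'S
      have h2 : m' ≠ m := Finset.ne_of_mem_erase (S'.max'_mem hS'ne)
      exact lt_of_le_of_ne h1 h2
    obtain ⟨t, htT, ht1, ht2⟩ := h m' hm'S m (S.max'_mem hSne) hm'lt
    have hkey := ih S' (T.erase t) hS'card ?_
    · have htTcard : 1 ≤ T.card := Finset.card_pos.mpr ⟨t, htT⟩
      rw [Finset.card_erase_of_mem htT] at hkey
      omega
    · intro s1 hs1 s2 hs2 h12
      obtain ⟨t', ht'T, ht'1, ht'2⟩ := h s1 (Finset.mem_of_mem_erase hs1) s2 (Finset.mem_of_mem_erase hs2) h12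
      refine ⟨t', Finset.mem_erase.mpr ⟨?_, ht'T⟩, ht'1, ht'2⟩
      have hs2le : s2 ≤ m' := S'.le_max' s2 hs2
      intro heq
      rw [heq] at ht'2
      linarith

lemma set_card_lemma {S T : Set ℝ} (hS : S.Finite) (hT : T.Finite)
    (h : ∀ s1 ∈ S, ∀ s2 ∈ S, s1 < s2 → ∃ t ∈ T, s1 < t ∧ t < s2) :
    S.ncard ≤ T.ncard + 1 := by
  rw [Set.ncard_eq_toFinset_card S hS, Set.ncard_eq_toFinset_card T hT]
  apply finset_card_lemma (hS.toFinset.card) _ _ rfl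
  intro s1 hs1 s2 hs2 h12
  obtain ⟨t, htT, ht1, ht2⟩ := h s1 (hS.mem_toFinset.mp hs1) s2 (hS.mem_toFinset.mp hs2) h12
  exact ⟨t, hT.mem_toFinset.mpr htT, ht1, ht2⟩

/-- Interlacing of zero counts for consecutive orders: with
`a = #{t ∈ (0,x) : J_ν(t) = 0}` and `b = #{t ∈ (0,x) : J_{ν+1}(t) = 0}`,
one has `b ≤ a ≤ b + 1`. -/
theorem bessel_zero_count_consecutive (ν : ℝ) (hν : 0 ≤ ν) (x : ℝ) (hx : 0 < x) :
    {t : ℝ | t ∈ Set.Ioo 0 x ∧ besselJ ν t = 0}.Finite ∧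
    {t : ℝ | t ∈ Set.Ioo 0 x ∧ besselJ (ν + 1) t = 0}.Finite ∧
    {t : ℝ | t ∈ Set.Ioo 0 x ∧ besselJ (ν + 1) t = 0}.ncard
      ≤ {t : ℝ | t ∈ Set.Ioo 0 x ∧ besselJ ν t = 0}.ncard ∧
    {t : ℝ | t ∈ Set.Ioo 0 x ∧ besselJ ν t = 0}.ncard
      ≤ {t : ℝ | t ∈ Set.Ioo 0 x ∧ besselJ (ν + 1) t = 0}.ncard + 1 := by
  have hν1 : (0:ℝ) ≤ ν + 1 := by linarith
  have hconv : ∀ μ : ℝ, 0 ≤ μ → {t : ℝ | t ∈ Set.Ioo 0 x ∧ besselJ μ t = 0}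
      = {t : ℝ | t ∈ Set.Ioo 0 x ∧ besselg μ ((t/2)^2) = 0} := by
    intro μ hμ
    ext t
    simp only [Set.mem_setOf_eq]
    constructor
    · rintro ⟨hmem, hz⟩
      refine ⟨hmem, ?_⟩
      rw [besselJ_eq hmem.1] at hz
      have hp : (0:ℝ) < (t/2) ^ μ := Real.rpow_pos_of_pos (by linarith [hmem.1]) μ
      exact (mul_eq_zero.mp hz).resolve_left hp.ne'
    · rintro ⟨hmem, hz⟩
      exact ⟨hmem, by rw [besselJ_eq hmem.1, hz, mul_zero]⟩
  rw [hconv ν hν, hconv (ν+1) hν1]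
  set A := {t : ℝ | t ∈ Set.Ioo 0 x ∧ besselg ν ((t/2)^2) = 0} with hAdef
  set B := {t : ℝ | t ∈ Set.Ioo 0 x ∧ besselg (ν+1) ((t/2)^2) = 0} with hBdef
  have hAfin : A.Finite := finite_zeros hν hx
  have hBfin : B.Finite := finite_zeros hν1 hx
  refine ⟨hAfin, hBfin, ?_, ?_⟩
  · -- B.ncard ≤ A.ncard
    have hpairs : ∀ s1 ∈ B ∪ {0}, ∀ s2 ∈ B ∪ {0}, s1 < s2 → ∃ t ∈ A, s1 < t ∧ t < s2 := by
      intro s1 hs1 s2 hs2 h12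
      have h01 : 0 ≤ s1 := by
        rcases hs1 with h | h
        · exact h.1.1.le
        · rw [Set.mem_singleton_iff.mp h]
      have hs2B : s2 ∈ B := by
        rcases hs2 with h | h
        · exact h
        · exfalso
          rw [Set.mem_singleton_iff.mp h] at h12
          linarith
      have hz1 : s1 = 0 ∨ besselg (ν+1) ((s1/2)^2) = 0 := by
        rcases hs1 with h | h
        · exact Or.inr h.2
        · exact Or.inl (Set.mem_singleton_iff.mp h)
      obtain ⟨ξ, hξmem, hξz⟩ := zero_between_upper hν h01 h12 hz1 hs2B.2
      exact ⟨ξ, ⟨⟨lt_of_le_of_lt h01 hξmem.1, hξmem.2.trans hs2B.1.2⟩, hξz⟩, hξmem.1, hξmem.2⟩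
    have hstep := set_card_lemma (hBfin.union (Set.finite_singleton 0)) hAfin hpairs
    have h0B : (0:ℝ) ∉ B := fun h => lt_irrefl 0 h.1.1
    have hcard : (B ∪ {0}).ncard = B.ncard + 1 := by
      rw [Set.union_singleton, Set.ncard_insert_of_notMem h0B hBfin]
    omega
  · -- A.ncard ≤ B.ncard + 1
    apply set_card_lemma hAfin hBfin
    intro s1 hs1 s2 hs2 h12
    obtain ⟨ξ, hξmem, hξz⟩ := zero_between_lower hν hs1.1.1 h12 hs1.2 hs2.2
    exact ⟨ξ, ⟨⟨hs1.1.1.trans hξmem.1, hξmem.2.trans hs2.1.2⟩, hξz⟩, hξmem.1, hξmem.2⟩
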